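/- Let (E, d) be a metric space of ultrametric norms on a finite-dimensional vector space V over a non-Archimedean field with d = d₁, and suppose diagonalizable norms are d₁-dense and (E,d₁) is complete. Given two norms N₀, N₁ and sequences of diagonalizable norms N₀ⁿ, N₁ⁿ with d₁(Nᵢⁿ, Nᵢ) ≤ 1/n, the geodesics Nₜⁿ between N₀ⁿ and N₁ⁿ form a d₁-Cauchy sequence for each fixed t, satisfying d₁(Nₜᵐ, Nₜⁿ) ≤ (1−t)·d₁(N₀ᵐ, N₀ⁿ) + t·d₁(N₁ᵐ, N₁ⁿ); hence the limit Nₜ = limₙ Nₜⁿ exists and is independent of the choice of approximating sequences. -/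
import Mathlib


/-- Abstract form of the construction of geodesics between non-diagonalizable norms:
in a complete metric space `E` (the space of ultrametric norms with the `d₁` distance)
with a dense subset `S` (the diagonalizable norms) carrying a geodesic interpolation `γ`
satisfying the metric convexity inequality, any two points `N₀, N₁` approximated by
sequences in `S` at distance `≤ 1/n` yield, for each fixed `t ∈ [0,1]`, a Cauchy sequence
of interpolants satisfying
`d(γ(A m, B m, t), γ(A n, B n, t)) ≤ (1−t) d(A m, A n) + t d(B m, B n)`;
hence the limit exists and is independent of the approximating sequences. -/
theorem stmt_14 {E : Type*} [MetricSpace E] [CompleteSpace E]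
    (S : Set E) (hdense : Dense S)
    (γ : E → E → ℝ → E)
    (hγS : ∀ a ∈ S, ∀ b ∈ S, ∀ t ∈ Set.Icc (0:ℝ) 1, γ a b t ∈ S)
    (hconv : ∀ a ∈ S, ∀ b ∈ S, ∀ a' ∈ S, ∀ b' ∈ S, ∀ t ∈ Set.Icc (0:ℝ) 1,
      dist (γ a b t) (γ a' b' t) ≤ (1 - t) * dist a a' + t * dist b b')
    (N0 N1 : E) :
    ∀ t ∈ Set.Icc (0:ℝ) 1,
      (∀ A B : ℕ → E, (∀ n, A n ∈ S) → (∀ n, B n ∈ S) →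
        (∀ n, dist (A n) N0 ≤ 1 / ((n : ℝ) + 1)) →
        (∀ n, dist (B n) N1 ≤ 1 / ((n : ℝ) + 1)) →
        (∀ m n : ℕ, dist (γ (A m) (B m) t) (γ (A n) (B n) t)
            ≤ (1 - t) * dist (A m) (A n) + t * dist (B m) (B n)) ∧
        ∃ L : E, Filter.Tendsto (fun n => γ (A n) (B n) t) Filter.atTop (nhds L)) ∧
      (∀ A B A' B' : ℕ → E,
        (∀ n, A n ∈ S) → (∀ n, B n ∈ S) → (∀ n, A' n ∈ S) → (∀ n, B' n ∈ S) →
        (∀ n, dist (A n) N0 ≤ 1 / ((n : ℝ) + 1)) →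
        (∀ n, dist (B n) N1 ≤ 1 / ((n : ℝ) + 1)) →
        (∀ n, dist (A' n) N0 ≤ 1 / ((n : ℝ) + 1)) →
        (∀ n, dist (B' n) N1 ≤ 1 / ((n : ℝ) + 1)) →
        ∀ L L' : E,
          Filter.Tendsto (fun n => γ (A n) (B n) t) Filter.atTop (nhds L) →
          Filter.Tendsto (fun n => γ (A' n) (B' n) t) Filter.atTop (nhds L') →
          L = L') := by
  intro t ht
  have htend : Filter.Tendsto (fun N : ℕ => 2 / ((N : ℝ) + 1)) Filter.atTop (nhds 0) := by
    have h := tendsto_one_div_add_atTop_nhds_zero_nat.const_mul (2:ℝ)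
    simp only [mul_zero] at h
    convert h using 2 with n
    ring
  have key : ∀ (A B : ℕ → E), (∀ n, A n ∈ S) → (∀ n, B n ∈ S) →
      (∀ n, dist (A n) N0 ≤ 1 / ((n : ℝ) + 1)) →
      (∀ n, dist (B n) N1 ≤ 1 / ((n : ℝ) + 1)) →
      ∀ m n N : ℕ, N ≤ m → N ≤ n →
        dist (γ (A m) (B m) t) (γ (A n) (B n) t) ≤ 2 / ((N : ℝ) + 1) := by
    intro A B hA hB hAd hBd m n N hm hn
    have hle : ∀ k, N ≤ k → (1 : ℝ) / ((k : ℝ) + 1) ≤ 1 / ((N : ℝ) + 1) := by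
      intro k hk
      apply one_div_le_one_div_of_le (by positivity)
      have : (N : ℝ) ≤ k := Nat.cast_le.2 hk
      linarith
    have hAmn : dist (A m) (A n) ≤ 2 / ((N : ℝ) + 1) := by
      calc dist (A m) (A n) ≤ dist (A m) N0 + dist N0 (A n) := dist_triangle _ _ _
        _ ≤ 1 / ((N:ℝ)+1) + 1 / ((N:ℝ)+1) := by
            have := hAd m; have := hAd n
            have h1 := hle m hm; have h2 := hle n hn
            rw [dist_comm N0 (A n)]; linarith [hAd m, hAd n]
        _ = 2 / ((N:ℝ)+1) := by ring
    have hBmn : dist (B m) (B n) ≤ 2 / ((N : ℝ) + 1) := by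
      calc dist (B m) (B n) ≤ dist (B m) N1 + dist N1 (B n) := dist_triangle _ _ _
        _ ≤ 1 / ((N:ℝ)+1) + 1 / ((N:ℝ)+1) := by
            have h1 := hle m hm; have h2 := hle n hn
            rw [dist_comm N1 (B n)]; linarith [hBd m, hBd n]
        _ = 2 / ((N:ℝ)+1) := by ring
    calc dist (γ (A m) (B m) t) (γ (A n) (B n) t)
        ≤ (1 - t) * dist (A m) (A n) + t * dist (B m) (B n) :=
          hconv _ (hA m) _ (hB m) _ (hA n) _ (hB n) _ ht
      _ ≤ (1 - t) * (2 / ((N:ℝ)+1)) + t * (2 / ((N:ℝ)+1)) := by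
          obtain ⟨ht0, ht1⟩ := ht
          gcongr <;> linarith
      _ = 2 / ((N:ℝ)+1) := by ring
  constructor
  · intro A B hA hB hAd hBd
    refine ⟨fun m n => hconv _ (hA m) _ (hB m) _ (hA n) _ (hB n) _ ht, ?_⟩
    have hc : CauchySeq (fun n => γ (A n) (B n) t) := by
      apply cauchySeq_of_le_tendsto_0 (fun N : ℕ => 2 / ((N : ℝ) + 1))
        (fun m n N hm hn => key A B hA hB hAd hBd m n N hm hn) htend
    exact cauchySeq_tendsto_of_complete hc
  · intro A B A' B' hA hB hA' hB' hAd hBd hA'd hB'd L L' hL hL'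
    have hdiff : Filter.Tendsto (fun n => dist (γ (A n) (B n) t) (γ (A' n) (B' n) t))
        Filter.atTop (nhds 0) := by
      refine squeeze_zero (g := fun n : ℕ => 2 / ((n:ℝ)+1)) (fun n => dist_nonneg) ?_ htend
      intro n
      calc dist (γ (A n) (B n) t) (γ (A' n) (B' n) t)
          ≤ (1 - t) * dist (A n) (A' n) + t * dist (B n) (B' n) :=
            hconv _ (hA n) _ (hB n) _ (hA' n) _ (hB' n) _ ht
        _ ≤ (1 - t) * (2 / ((n:ℝ)+1)) + t * (2 / ((n:ℝ)+1)) := by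
            obtain ⟨ht0, ht1⟩ := ht
            have hAn : dist (A n) (A' n) ≤ 2 / ((n:ℝ)+1) := by
              calc dist (A n) (A' n) ≤ dist (A n) N0 + dist N0 (A' n) := dist_triangle _ _ _
                _ ≤ 1/((n:ℝ)+1) + 1/((n:ℝ)+1) := by
                    rw [dist_comm N0]; linarith [hAd n, hA'd n]
                _ = 2/((n:ℝ)+1) := by ring
            have hBn : dist (B n) (B' n) ≤ 2 / ((n:ℝ)+1) := by
              calc dist (B n) (B' n) ≤ dist (B n) N1 + dist N1 (B' n) := dist_triangle _ _ _
                _ ≤ 1/((n:ℝ)+1) + 1/((n:ℝ)+1) := by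
                    rw [dist_comm N1]; linarith [hBd n, hB'd n]
                _ = 2/((n:ℝ)+1) := by ring
            gcongr <;> linarith
        _ = 2 / ((n:ℝ)+1) := by ring
    have : Filter.Tendsto (fun n => dist (γ (A n) (B n) t) (γ (A' n) (B' n) t))
        Filter.atTop (nhds (dist L L')) := (hL.dist hL')
    have hd0 : dist L L' = 0 := tendsto_nhds_unique this hdiff
    exact dist_eq_zero.mp hd0
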